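/- arXiv:1406.5663 — 2 statements merged into one kernel-verified Lean document; each statement's English description precedes it below -/
import Mathlib

section
/- Let H be a real symmetric d×d matrix with an orthonormal basis of eigenvectors v₁, …, v_d corresponding to eigenvalues λ₁ ≥ λ₂ ≥ … ≥ λ_d, and assume λ₂ < 0 and λ₁ > λ₂. Let e₁ be a unit vector satisfying ⟨v₁, e₁⟩² > λ₁/(λ₁ − λ₂). Then for every nonzero vector u orthogonal to e₁ one has uᵀ H u < 0; that is, H is negative definite on the hyperplane orthogonal to e₁. (Core of Lemma 4: the eigen-gap condition (v₁ᵀe₁)² > λ₁/(λ₁−λ₂) forces the Hessian to be negative definite on the subspace 𝕃 = e₁⊥.) -/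
open Matrix

/-- Core of Lemma 4: if `λ₂ < 0 < λ₁ - λ₂` and the unit vector `e₁` satisfies
`⟨v₁, e₁⟩² > λ₁ / (λ₁ − λ₂)`, then the symmetric matrix `H` is negative definite
on the hyperplane orthogonal to `e₁`. -/
theorem stmt7 (d : ℕ) (hd : 2 ≤ d) (H : Matrix (Fin d) (Fin d) ℝ) (hH : Hᵀ = H)
    (v : Fin d → (Fin d → ℝ)) (lam : Fin d → ℝ)
    (horth : ∀ i j : Fin d, v i ⬝ᵥ v j = if i = j then 1 else 0)
    (heig : ∀ i : Fin d, H.mulVec (v i) = lam i • v i)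
    (hmono : Antitone lam)
    (hlam2 : lam ⟨1, by omega⟩ < 0)
    (hgap : lam ⟨0, by omega⟩ > lam ⟨1, by omega⟩)
    (e1 : Fin d → ℝ) (he1 : e1 ⬝ᵥ e1 = 1)
    (halign : (v ⟨0, by omega⟩ ⬝ᵥ e1) ^ 2 >
      lam ⟨0, by omega⟩ / (lam ⟨0, by omega⟩ - lam ⟨1, by omega⟩)) :
    ∀ u : Fin d → ℝ, u ≠ 0 → e1 ⬝ᵥ u = 0 → u ⬝ᵥ H.mulVec u < 0 := by
  intro u hu hperp
  set i0 : Fin d := ⟨0, by omega⟩ with hi0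
  set i1 : Fin d := ⟨1, by omega⟩ with hi1
  set V : Matrix (Fin d) (Fin d) ℝ := Matrix.of v with hV
  have hVVt : V * Vᵀ = 1 := by
    ext i j
    simpa [Matrix.mul_apply, Matrix.one_apply, dotProduct, hV] using horth i j
  have hVtV : Vᵀ * V = 1 := mul_eq_one_comm.mp hVVt
  have key : ∀ x y : Fin d → ℝ, (V *ᵥ x) ⬝ᵥ (V *ᵥ y) = x ⬝ᵥ y := by
    intro x y
    rw [Matrix.dotProduct_mulVec, Matrix.vecMul_mulVec, hVtV, Matrix.vecMul_one]
  set c : Fin d → ℝ := fun i => v i ⬝ᵥ u with hc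
  have hcV : V *ᵥ u = c := by
    ext i
    simp [Matrix.mulVec, hV, hc]
  -- components of H u in the eigenbasis
  have hHu : V *ᵥ (H *ᵥ u) = fun i => lam i * c i := by
    ext i
    have : v i ⬝ᵥ (H *ᵥ u) = (H *ᵥ v i) ⬝ᵥ u := by
      rw [Matrix.dotProduct_mulVec, ← Matrix.mulVec_transpose, hH]
    simp only [Matrix.mulVec, hV]
    show v i ⬝ᵥ (H *ᵥ u) = lam i * c i
    rw [this, heig i, smul_dotProduct]
    simp [hc, smul_eq_mul]
  have hS : u ⬝ᵥ u = ∑ i, c i ^ 2 := by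
    have := key u u
    rw [hcV] at this
    rw [← this]
    simp [dotProduct, sq]
  have hquad : u ⬝ᵥ (H *ᵥ u) = ∑ i, lam i * c i ^ 2 := by
    have := key u (H *ᵥ u)
    rw [hcV, hHu] at this
    rw [← this]
    simp only [dotProduct]
    exact Finset.sum_congr rfl fun i _ => by ring
  set S : ℝ := ∑ i, c i ^ 2 with hSdef
  set a : ℝ := v i0 ⬝ᵥ e1 with ha
  -- S > 0
  have hSpos : 0 < S := by
    rw [← hS]
    have hne : u ⬝ᵥ u ≠ 0 := by
      intro h
      apply hu
      ext j
      have hsum : ∑ i, u i ^ 2 = 0 := by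
        rw [← h]; simp [dotProduct, sq]
      have hj : u j ^ 2 = 0 := by
        have := Finset.sum_eq_zero_iff_of_nonneg (fun i _ => sq_nonneg (u i)) |>.mp hsum j (Finset.mem_univ j)
        exact this
      have := sq_eq_zero_iff.mp hj
      simpa using this
    have hnn : 0 ≤ u ⬝ᵥ u := by
      simp only [dotProduct]
      exact Finset.sum_nonneg fun i _ => mul_self_nonneg _
    exact lt_of_le_of_ne hnn (Ne.symm hne)
  -- Cauchy-Schwarz bound on c i0
  have hc0 : c i0 ^ 2 ≤ (1 - a ^ 2) * S := by
    have hw : c i0 = (fun j => v i0 j - a * e1 j) ⬝ᵥ u := by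
      simp only [dotProduct, hc]
      rw [Finset.sum_congr rfl (fun j _ => by ring_nf : ∀ j ∈ Finset.univ, (v i0 j - a * e1 j) * u j = v i0 j * u j - a * (e1 j * u j))]
      rw [Finset.sum_sub_distrib]
      have h4 : ∑ j, a * (e1 j * u j) = a * (e1 ⬝ᵥ u) := by
        simp [dotProduct, Finset.mul_sum]
      rw [h4, hperp]
      ring
    have hww : (fun j => v i0 j - a * e1 j) ⬝ᵥ (fun j => v i0 j - a * e1 j) = 1 - a ^ 2 := by
      simp only [dotProduct]
      have expand : ∀ j, (v i0 j - a * e1 j) * (v i0 j - a * e1 j)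
          = v i0 j * v i0 j - 2 * a * (v i0 j * e1 j) + a ^ 2 * (e1 j * e1 j) := by
        intro j; ring
      rw [Finset.sum_congr rfl fun j _ => expand j]
      rw [Finset.sum_add_distrib, Finset.sum_sub_distrib, ← Finset.mul_sum, ← Finset.mul_sum]
      have h1 : ∑ j, v i0 j * v i0 j = 1 := by
        have := horth i0 i0; simpa [dotProduct] using this
      have h2 : (∑ j, v i0 j * e1 j) = a := rfl
      have h3 : ∑ j, e1 j * e1 j = 1 := he1
      rw [h1, h2, h3]
      ring
    calc c i0 ^ 2 = ((fun j => v i0 j - a * e1 j) ⬝ᵥ u) ^ 2 := by rw [hw]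
      _ ≤ ((fun j => v i0 j - a * e1 j) ⬝ᵥ (fun j => v i0 j - a * e1 j)) * (u ⬝ᵥ u) := by
          have := Finset.sum_mul_sq_le_sq_mul_sq Finset.univ
            (fun j => v i0 j - a * e1 j) u
          calc ((fun j => v i0 j - a * e1 j) ⬝ᵥ u) ^ 2
              = (∑ j, (fun j => v i0 j - a * e1 j) j * u j) ^ 2 := rfl
            _ ≤ (∑ j, ((fun j => v i0 j - a * e1 j) j) ^ 2) * ∑ j, (u j) ^ 2 := this
            _ = ((fun j => v i0 j - a * e1 j) ⬝ᵥ (fun j => v i0 j - a * e1 j)) * (u ⬝ᵥ u) := by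
                simp [dotProduct, sq]
      _ = (1 - a ^ 2) * S := by rw [hww, hS]
  -- bound the quadratic form
  have hsplit : ∑ i, lam i * c i ^ 2
      ≤ lam i0 * c i0 ^ 2 + lam i1 * (S - c i0 ^ 2) := by
    have h1 : ∑ i, lam i * c i ^ 2
        = lam i0 * c i0 ^ 2 + ∑ i ∈ Finset.univ.erase i0, lam i * c i ^ 2 := by
      rw [← Finset.add_sum_erase _ _ (Finset.mem_univ i0)]
    have h2 : ∑ i ∈ Finset.univ.erase i0, lam i * c i ^ 2
        ≤ ∑ i ∈ Finset.univ.erase i0, lam i1 * c i ^ 2 := by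
      apply Finset.sum_le_sum
      intro i hi
      have hi0ne : i ≠ i0 := Finset.ne_of_mem_erase hi
      have hile : i1 ≤ i := by
        have : (1 : ℕ) ≤ i.val := by
          rcases Nat.eq_zero_or_pos i.val with h | h
          · exfalso; apply hi0ne; apply Fin.ext; simp [h, hi0]
          · exact h
        exact this
      have := hmono hile
      exact mul_le_mul_of_nonneg_right this (sq_nonneg _)
    have h3 : ∑ i ∈ Finset.univ.erase i0, lam i1 * c i ^ 2
        = lam i1 * (S - c i0 ^ 2) := by
      rw [← Finset.mul_sum]
      congr 1
      rw [Finset.sum_erase_eq_sub (Finset.mem_univ i0), hSdef]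
    linarith
  -- alignment condition
  have hgap' : 0 < lam i0 - lam i1 := by linarith
  have halign' : lam i0 < a ^ 2 * (lam i0 - lam i1) := by
    have := (div_lt_iff₀ hgap').mp (lt_of_le_of_lt (le_refl _) halign)
    linarith [this]
  have ha2le : a ^ 2 ≤ 1 := by
    have hCS := Finset.sum_mul_sq_le_sq_mul_sq Finset.univ (v i0) e1
    have h1 : ∑ j, (v i0 j) ^ 2 = 1 := by
      have := horth i0 i0; simpa [dotProduct, sq] using this
    have h2 : ∑ j, (e1 j) ^ 2 = 1 := by
      simpa [dotProduct, sq] using he1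
    have h3 : (∑ j, v i0 j * e1 j) = a := rfl
    rw [h1, h2, h3] at hCS
    linarith
  -- combine
  rw [hquad]
  have hstep : lam i0 * c i0 ^ 2 + lam i1 * (S - c i0 ^ 2)
      = (lam i0 - lam i1) * c i0 ^ 2 + lam i1 * S := by ring
  have hbd : (lam i0 - lam i1) * c i0 ^ 2 ≤ (lam i0 - lam i1) * ((1 - a ^ 2) * S) :=
    mul_le_mul_of_nonneg_left hc0 (le_of_lt hgap')
  have hfinal : (lam i0 - lam i1) * ((1 - a ^ 2) * S) + lam i1 * S < 0 := by
    have hcoef : (lam i0 - lam i1) * (1 - a ^ 2) + lam i1 < 0 := by nlinarith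
    nlinarith
  linarith
end

section
/- Let R₁ and R₂ be two nonempty compact subsets of ℝ^d, each of which is a closed non-self-intersecting curve, i.e. the image of a continuous injective map from the circle into ℝ^d. Suppose r₁, r₂ > 0 are such that every point z ∈ ℝ^d with d(z, R₁) ≤ r₁ has a unique nearest point in R₁, and every point z with d(z, R₂) ≤ r₂ has a unique nearest point in R₂ (so R₁ and R₂ have reach at least r₁ and r₂ respectively). If Haus(R₁, R₂) < (2 − √2) · min{r₁, r₂}, then dist_Π(R₂, R₁) = dist_Π(R₁, R₂) = Haus(R₁, R₂). (Lemma 7: for two closed curves with positive reach that are sufficiently close in Hausdorff distance, the quasi-Hausdorff distances in both directions agree with the Hausdorff distance.) -/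
open Metric

/-- The quasi-Hausdorff distance `dist_Π(A, B) = sup_{x ∈ B} d(x, A)`. -/
noncomputable def distPi {d : ℕ} (A B : Set (EuclideanSpace ℝ (Fin d))) : ℝ :=
  ⨆ x ∈ B, Metric.infDist x A

/-- The Hausdorff distance `Haus(A, B) = max{dist_Π(A, B), dist_Π(B, A)}`. -/
noncomputable def hausDist {d : ℕ} (A B : Set (EuclideanSpace ℝ (Fin d))) : ℝ :=
  max (distPi A B) (distPi B A)

open Complex


open Metric Complex

/-- A map to the circle "has a continuous logarithm". -/
def HasCLog (f : Circle → Circle) : Prop :=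
  ∃ θ : Circle → ℝ, Continuous θ ∧ ∀ z, Circle.exp (θ z) = f z

lemma circle_slitPlane {z : Circle} (h : (z : ℂ) ≠ -1) : (z : ℂ) ∈ Complex.slitPlane := by
  rw [Complex.mem_slitPlane_iff]
  by_contra hc
  push_neg at hc
  obtain ⟨h1, h2⟩ := hc
  apply h
  have hre : (z : ℂ) = ((z : ℂ).re : ℂ) := by
    apply Complex.ext <;> simp [h2]
  have habs : ‖(z : ℂ)‖ = 1 := Circle.norm_coe z
  rw [hre, Complex.norm_real, Real.norm_eq_abs] at habs
  have : (z : ℂ).re = -1 := by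
    rcases abs_eq (by norm_num : (0:ℝ) ≤ 1) |>.1 habs with h | h
    · nlinarith
    · exact h
  rw [hre, this]; norm_num

/-- There is no continuous logarithm of the identity on the circle. -/
lemma no_clog_id : ¬ HasCLog id := by
  rintro ⟨θ, hθc, hθ⟩
  set m : Circle := Circle.exp Real.pi with hm
  have hmc : (m : ℂ) = -1 := by
    rw [hm, Circle.coe_exp, Complex.exp_pi_mul_I]
  have hmm : m * m = 1 := by
    rw [hm, ← Circle.exp_add]
    have : Real.pi + Real.pi = 0 + 2 * Real.pi := by ring
    rw [this, Circle.periodic_exp 0, Circle.exp_zero]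
  set ψ : Circle → ℝ := fun z => θ z - θ (m * z) with hψ
  have hψc : Continuous ψ := hθc.sub (hθc.comp (continuous_const.mul continuous_id))
  have hψval : ∀ z, Circle.exp (ψ z) = m⁻¹ := by
    intro z
    rw [hψ]
    simp only [Circle.exp_sub, hθ]
    rw [id, id, div_eq_iff_eq_mul]
    group
  have hψint : ∀ z, ∃ k : ℤ, ψ z = -Real.pi + k * (2 * Real.pi) := by
    intro z
    have : Circle.exp (ψ z) = Circle.exp (-Real.pi) := by
      rw [hψval z, Circle.exp_neg, hm]
    exact Circle.exp_eq_exp.1 this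
  have hsurj : Function.Surjective (Circle.exp) := fun z => ⟨Complex.arg z, Circle.exp_arg z⟩
  have hconn : IsPreconnected (Set.range ψ) := by
    have h1 : IsPreconnected ((ψ ∘ Circle.exp) '' Set.univ) :=
      isPreconnected_univ.image _ (hψc.comp Circle.exp.continuous).continuousOn
    have h2 : (ψ ∘ Circle.exp) '' Set.univ = Set.range ψ := by
      rw [Set.image_univ, Set.range_comp, hsurj.range_eq, Set.image_univ]
    rwa [h2] at h1
  have hconst : ∀ z w : Circle, ψ z = ψ w := by
    have key : ∀ z w : Circle, ψ z < ψ w → False := by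
      intro z w hlt
      have hIcc : Set.Icc (ψ z) (ψ w) ⊆ Set.range ψ :=
        hconn.Icc_subset ⟨z, rfl⟩ ⟨w, rfl⟩
      obtain ⟨j, hj⟩ := hψint z
      obtain ⟨k, hk⟩ := hψint w
      have hjk : (j : ℝ) < (k : ℝ) := by
        have hπ : (0:ℝ) < Real.pi := Real.pi_pos
        nlinarith
      have hjk' : (j:ℝ) + 1 ≤ (k:ℝ) := by exact_mod_cast Int.add_one_le_of_lt (by exact_mod_cast hjk)
      have hmem : ψ z + Real.pi ∈ Set.Icc (ψ z) (ψ w) := by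
        constructor
        · linarith [Real.pi_pos]
        · rw [hj, hk]; nlinarith [Real.pi_pos]
      obtain ⟨x, hx⟩ := hIcc hmem
      obtain ⟨n, hn⟩ := hψint x
      rw [hx, hj] at hn
      have h2 : ((2 * (n - j) : ℤ) : ℝ) = ((1:ℤ):ℝ) := by push_cast; nlinarith [Real.pi_pos, Real.pi_ne_zero]
      have := Int.cast_injective (α := ℝ) h2
      omega
    intro z w
    by_contra hne
    rcases lt_or_gt_of_ne hne with h | h
    exacts [key _ _ h, key _ _ h]
  have hzero : ψ 1 = 0 := by
    have h1 : ψ 1 + ψ (m * 1) = 0 := by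
      simp only [hψ]
      rw [← mul_assoc, hmm]
      ring_nf
      exact sub_eq_zero.2 rfl
    have h2 : ψ (m * 1) = ψ 1 := hconst _ _
    linarith
  have h3 := hψval 1
  rw [hzero, Circle.exp_zero] at h3
  have h4 : (1 : ℂ) = ((m⁻¹ : Circle) : ℂ) := by rw [← h3]; rfl
  rw [Circle.coe_inv, hmc] at h4
  norm_num at h4

/-- Transfer of continuous logarithms between maps that are never antipodal. -/
lemma HasCLog.transfer {f g : Circle → Circle} (hf : Continuous f) (hg : Continuous g)
    (hne : ∀ z, (g z : ℂ) ≠ -(f z : ℂ)) : HasCLog f → HasCLog g := by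
  rintro ⟨θ, hθc, hθ⟩
  refine ⟨fun z => θ z + Complex.arg ((g z / f z : Circle) : ℂ), ?_, ?_⟩
  · apply hθc.add
    rw [continuous_iff_continuousAt]
    intro z
    have hratio : Continuous fun z => ((g z / f z : Circle) : ℂ) :=
      continuous_induced_dom.comp (hg.div' hf)
    have hne1 : ((g z / f z : Circle) : ℂ) ≠ -1 := by
      rw [Circle.coe_div]
      intro h
      apply hne z
      field_simp at h
      linear_combination h
    have hc2 : ContinuousAt (Complex.arg ∘ fun z => ((g z / f z : Circle) : ℂ)) z :=
      ContinuousAt.comp (Complex.continuousAt_arg (circle_slitPlane hne1)) hratio.continuousAt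
    exact hc2
  · intro z
    rw [Circle.exp_add, hθ, Circle.exp_arg]
    first
      | exact mul_div_cancel _ _
      | exact mul_div_cancel₀ _ _
      | (rw [mul_comm]; exact div_mul_cancel₀ _ _)
      | (apply Circle.coe_injective; push_cast; field_simp)

/-- Transfer of continuous logarithms along a homotopy. -/
lemma HasCLog.homotopy {H : ℝ × Circle → Circle} (hH : Continuous H) (s t : ℝ)
    (hs : HasCLog (fun z => H (s, z))) : HasCLog (fun z => H (t, z)) := by
  set γ : C(ℝ, C(Circle, Circle)) := ContinuousMap.curry ⟨H, hH⟩ with hγ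
  have hγapp : ∀ a z, γ a z = H (a, z) := fun a z => rfl
  set Q : Set ℝ := {a | HasCLog (fun z => H (a, z))} with hQ
  have hnbhd : ∀ a : ℝ, ∀ᶠ b in nhds a, (b ∈ Q ↔ a ∈ Q) := by
    intro a
    have hcont : Filter.Tendsto (fun b => dist (γ b) (γ a)) (nhds a) (nhds (dist (γ a) (γ a))) :=
      ((continuous_id.dist continuous_const).comp γ.continuous).tendsto a
    rw [dist_self] at hcont
    have hev : ∀ᶠ b in nhds a, dist (γ b) (γ a) < 2 :=
      hcont.eventually_lt_const (by norm_num)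
    filter_upwards [hev] with b hb
    have hptwise : ∀ z, dist (H (b, z)) (H (a, z)) < 2 := by
      intro z
      calc dist (H (b, z)) (H (a, z)) = dist (γ b z) (γ a z) := rfl
        _ ≤ dist (γ b) (γ a) := ContinuousMap.dist_apply_le_dist z
        _ < 2 := hb
    have hcb : Continuous fun z => H (b, z) := hH.comp (continuous_const.prodMk continuous_id)
    have hca : Continuous fun z => H (a, z) := hH.comp (continuous_const.prodMk continuous_id)
    have hne : ∀ z, (H (b, z) : ℂ) ≠ -(H (a, z) : ℂ) := by
      intro z h
      have : dist (H (b, z)) (H (a, z)) = 2 := by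
        have : dist ((H (b, z)) : ℂ) ((H (a, z)) : ℂ) = 2 := by
          rw [h, dist_eq_norm]
          have : -(H (a, z) : ℂ) - (H (a, z) : ℂ) = -(2 * (H (a, z) : ℂ)) := by ring
          rw [this, norm_neg, norm_mul]
          have : ‖(H (a, z) : ℂ)‖ = 1 := by
            simpa using Circle.norm_coe (H (a, z))
          rw [this]; simp
        exact this
      linarith [hptwise z]
    have hne' : ∀ z, (H (a, z) : ℂ) ≠ -(H (b, z) : ℂ) := by
      intro z h
      exact hne z (by rw [h]; ring)
    constructor
    · exact fun h => HasCLog.transfer hcb hca hne' h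
    · exact fun h => HasCLog.transfer hca hcb hne h
  have hopen : IsOpen Q := by
    rw [isOpen_iff_mem_nhds]
    intro a ha
    filter_upwards [hnbhd a] with b hb
    exact hb.2 ha
  have hclosed : IsOpen Qᶜ := by
    rw [isOpen_iff_mem_nhds]
    intro a ha
    filter_upwards [hnbhd a] with b hb hbQ
    exact ha (hb.1 hbQ)
  have : Q = Set.univ := by
    refine IsClopen.eq_univ ⟨?_, hopen⟩ ⟨s, hs⟩
    rw [← isOpen_compl_iff]
    exact hclosed
  exact (this ▸ Set.mem_univ t : t ∈ Q)

section Proj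
variable {N : ℕ} {A : Set (EuclideanSpace ℝ (Fin N))} {r : ℝ}

/-- The nearest-point projection onto a set with reach at least `r`,
defined on the tube of radius `r`. -/
noncomputable def projT
    (hreach : ∀ z : EuclideanSpace ℝ (Fin N), Metric.infDist z A ≤ r →
      ∃! y, y ∈ A ∧ dist z y = Metric.infDist z A) :
    {z : EuclideanSpace ℝ (Fin N) // Metric.infDist z A ≤ r} → EuclideanSpace ℝ (Fin N) :=
  fun z => (hreach z.1 z.2).choose

variable (hreach : ∀ z : EuclideanSpace ℝ (Fin N), Metric.infDist z A ≤ r →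
      ∃! y, y ∈ A ∧ dist z y = Metric.infDist z A)

lemma projT_mem (z) : projT hreach z ∈ A := (hreach z.1 z.2).choose_spec.1.1

lemma projT_dist (z) : dist z.1 (projT hreach z) = Metric.infDist z.1 A :=
  (hreach z.1 z.2).choose_spec.1.2

lemma projT_unique {z} {q : EuclideanSpace ℝ (Fin N)} (hq : q ∈ A)
    (hd : dist z.1 q = Metric.infDist z.1 A) : q = projT hreach z :=
  (hreach z.1 z.2).choose_spec.2 q ⟨hq, hd⟩

lemma projT_fix {z} (hz : z.1 ∈ A) : projT hreach z = z.1 := by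
  symm
  apply projT_unique hreach hz
  rw [Metric.infDist_zero_of_mem hz, dist_self]

lemma projT_continuous (hA : IsCompact A) : Continuous (projT hreach) := by
  apply SeqContinuous.continuous
  intro u z hu
  apply Filter.tendsto_of_subseq_tendsto
  intro ns hns
  obtain ⟨q, hqA, φ, hφ, hφt⟩ :=
    hA.tendsto_subseq (x := fun n => projT hreach (u (ns n))) (fun n => projT_mem hreach _)
  refine ⟨φ, ?_⟩
  have huφ : Filter.Tendsto (fun n => (u (ns (φ n))).1) Filter.atTop (nhds z.1) :=
    ((continuous_subtype_val.tendsto z).comp hu).comp (hns.comp hφ.tendsto_atTop)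
  have hd1 : Filter.Tendsto
      (fun n => dist (u (ns (φ n))).1 (projT hreach (u (ns (φ n))))) Filter.atTop
      (nhds (dist z.1 q)) := huφ.dist hφt
  have hd2 : Filter.Tendsto
      (fun n => dist (u (ns (φ n))).1 (projT hreach (u (ns (φ n))))) Filter.atTop
      (nhds (Metric.infDist z.1 A)) := by
    have : ∀ n, dist (u (ns (φ n))).1 (projT hreach (u (ns (φ n))))
        = Metric.infDist (u (ns (φ n))).1 A := fun n => projT_dist hreach _
    simp only [this]
    exact (continuous_infDist_pt A).tendsto z.1 |>.comp huφ
  have hq : q = projT hreach z :=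
    projT_unique hreach hqA (tendsto_nhds_unique hd1 hd2)
  rwa [hq] at hφt

end Proj


lemma distPi_exists_max {d : ℕ} (A B : Set (EuclideanSpace ℝ (Fin d)))
    (hBne : B.Nonempty) (hBc : IsCompact B) :
    ∃ x₀ ∈ B, distPi A B = Metric.infDist x₀ A ∧
      ∀ x ∈ B, Metric.infDist x A ≤ Metric.infDist x₀ A := by
  obtain ⟨x₀, hx₀B, hmax⟩ :=
    hBc.exists_isMaxOn hBne ((continuous_infDist_pt A).continuousOn)
  have hmax' : ∀ x ∈ B, Metric.infDist x A ≤ Metric.infDist x₀ A := fun x hx => hmax hx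
  refine ⟨x₀, hx₀B, ?_, hmax'⟩
  have hub : ∀ x, (⨆ _ : x ∈ B, Metric.infDist x A) ≤ Metric.infDist x₀ A := by
    intro x
    apply Real.iSup_le _ Metric.infDist_nonneg
    intro hx
    exact hmax' x hx
  apply le_antisymm
  · exact Real.iSup_le hub Metric.infDist_nonneg
  · have hbdd : BddAbove (Set.range fun x => ⨆ _ : x ∈ B, Metric.infDist x A) := by
      refine ⟨Metric.infDist x₀ A, ?_⟩
      rintro y ⟨x, rfl⟩
      exact hub x
    have h1 : (⨆ _ : x₀ ∈ B, Metric.infDist x₀ A) = Metric.infDist x₀ A := ciSup_pos hx₀B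
    rw [← h1]
    exact le_ciSup hbdd x₀

/-- The unit circle in `ℂ` is homeomorphic to the unit sphere of `EuclideanSpace ℝ (Fin 2)`. -/
noncomputable def circleSphereHomeo :
    Circle ≃ₜ (Metric.sphere (0 : EuclideanSpace ℝ (Fin 2)) 1) where
  toFun z := ⟨Complex.orthonormalBasisOneI.repr (z : ℂ), by
    rw [mem_sphere_zero_iff_norm, LinearIsometryEquiv.norm_map]
    simpa using Circle.norm_coe z⟩
  invFun x := ⟨Complex.orthonormalBasisOneI.repr.symm (x : EuclideanSpace ℝ (Fin 2)), by
    have : ‖Complex.orthonormalBasisOneI.repr.symm (x : EuclideanSpace ℝ (Fin 2))‖ = 1 := by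
      rw [LinearIsometryEquiv.norm_map]
      exact mem_sphere_zero_iff_norm.1 x.2
    exact mem_sphere_zero_iff_norm.2 this⟩
  left_inv z := by
    apply Circle.coe_injective
    simp
  right_inv x := by
    apply Subtype.ext
    simp only [Complex.orthonormalBasisOneI_repr_symm_apply]
    ext i
    rw [Complex.orthonormalBasisOneI_repr_apply]
    simp only [Complex.add_re, Complex.ofReal_re, Complex.mul_re, Complex.I_re, Complex.I_im,
      Complex.ofReal_im, Complex.add_im, Complex.mul_im]
    fin_cases i <;> [skip; skip] <;> simp <;> ring
  continuous_toFun := by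
    apply Continuous.subtype_mk
    exact Complex.orthonormalBasisOneI.repr.continuous.comp continuous_subtype_val
  continuous_invFun := by
    apply Continuous.subtype_mk
    exact Complex.orthonormalBasisOneI.repr.symm.continuous.comp continuous_subtype_val

set_option maxHeartbeats 1600000 in
/-- Key asymmetric lemma. -/
theorem key_le (d : ℕ) (R₁ R₂ : Set (EuclideanSpace ℝ (Fin d)))
    (hR₁ne : R₁.Nonempty) (hR₂ne : R₂.Nonempty)
    (hR₁c : IsCompact R₁) (hR₂c : IsCompact R₂)
    (hcurve₁ : ∃ f : Metric.sphere (0 : EuclideanSpace ℝ (Fin 2)) 1 →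
        EuclideanSpace ℝ (Fin d),
      Continuous f ∧ Function.Injective f ∧ R₁ = Set.range f)
    (hcurve₂ : ∃ f : Metric.sphere (0 : EuclideanSpace ℝ (Fin 2)) 1 →
        EuclideanSpace ℝ (Fin d),
      Continuous f ∧ Function.Injective f ∧ R₂ = Set.range f)
    (r₁ r₂ : ℝ) (hr₁ : 0 < r₁) (hr₂ : 0 < r₂)
    (hreach₁ : ∀ z : EuclideanSpace ℝ (Fin d), Metric.infDist z R₁ ≤ r₁ →
      ∃! y, y ∈ R₁ ∧ dist z y = Metric.infDist z R₁)
    (hreach₂ : ∀ z : EuclideanSpace ℝ (Fin d), Metric.infDist z R₂ ≤ r₂ →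
      ∃! y, y ∈ R₂ ∧ dist z y = Metric.infDist z R₂)
    (hclose : hausDist R₁ R₂ < (2 - Real.sqrt 2) * min r₁ r₂) :
    distPi R₂ R₁ ≤ distPi R₁ R₂ := by
  by_contra hlt
  push_neg at hlt
  -- notation
  obtain ⟨x₀, hx₀R₁, hεeq, hεmax⟩ := distPi_exists_max R₂ R₁ hR₁ne hR₁c
  set ε : ℝ := distPi R₂ R₁ with hε
  set δ : ℝ := distPi R₁ R₂ with hδ
  have hδε : δ < ε := hlt
  have hhaus : hausDist R₁ R₂ = ε := max_eq_right hδε.le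
  have hsqrt2 : (1:ℝ) ≤ Real.sqrt 2 := by
    rw [show (1:ℝ) = Real.sqrt 1 by simp]
    exact Real.sqrt_le_sqrt (by norm_num)
  have hεr : ε < min r₁ r₂ := by
    have hmin : 0 < min r₁ r₂ := lt_min hr₁ hr₂
    calc ε = hausDist R₁ R₂ := hhaus.symm
      _ < (2 - Real.sqrt 2) * min r₁ r₂ := hclose
      _ ≤ 1 * min r₁ r₂ := by nlinarith
      _ = min r₁ r₂ := one_mul _
  have hεr₁ : ε < r₁ := lt_of_lt_of_le hεr (min_le_left _ _)
  have hεr₂ : ε < r₂ := lt_of_lt_of_le hεr (min_le_right _ _)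
  have hδnonneg : 0 ≤ δ := by
    obtain ⟨y₀, hy₀, h1, _⟩ := distPi_exists_max R₁ R₂ hR₂ne hR₂c
    rw [hδ, h1]; exact Metric.infDist_nonneg
  have hεpos : 0 < ε := lt_of_le_of_lt hδnonneg hδε
  -- bounds
  have hδbound : ∀ y ∈ R₂, Metric.infDist y R₁ ≤ δ := by
    obtain ⟨y₀, hy₀, h1, h2⟩ := distPi_exists_max R₁ R₂ hR₂ne hR₂c
    intro y hy
    rw [hδ, h1]
    exact h2 y hy
  have hεbound : ∀ x ∈ R₁, Metric.infDist x R₂ ≤ ε := by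
    intro x hx
    exact le_trans (hεmax x hx) (le_of_eq hεeq.symm)
  have hx₀ε : Metric.infDist x₀ R₂ = ε := hεeq.symm
  -- tube membership lemmas
  have htube₁ : ∀ y ∈ R₂, Metric.infDist y R₁ ≤ r₁ :=
    fun y hy => le_trans (hδbound y hy) (le_trans hδε.le hεr₁.le)
  have htube₂ : ∀ x ∈ R₁, Metric.infDist x R₂ ≤ r₂ :=
    fun x hx => le_trans (hεbound x hx) hεr₂.le
  -- homeomorphisms with the circle
  obtain ⟨f₁, hf₁c, hf₁i, hf₁r⟩ := hcurve₁
  obtain ⟨f₂, hf₂c, hf₂i, hf₂r⟩ := hcurve₂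
  have he₁ : Metric.sphere (0 : EuclideanSpace ℝ (Fin 2)) 1 ≃ₜ ↥R₁ :=
    ((hf₁c.isClosedEmbedding hf₁i).toIsEmbedding.toHomeomorph).trans
      (Homeomorph.setCongr hf₁r.symm)
  have he₂ : Metric.sphere (0 : EuclideanSpace ℝ (Fin 2)) 1 ≃ₜ ↥R₂ :=
    ((hf₂c.isClosedEmbedding hf₂i).toIsEmbedding.toHomeomorph).trans
      (Homeomorph.setCongr hf₂r.symm)
  set g₁ : Circle ≃ₜ ↥R₁ := circleSphereHomeo.trans he₁ with hg₁
  set g₂ : Circle ≃ₜ ↥R₂ := circleSphereHomeo.trans he₂ with hg₂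
  -- the projection-based maps
  set p₁ := projT hreach₁ with hp₁
  set p₂ := projT hreach₂ with hp₂
  set Ac : Circle → Circle := fun z =>
    g₁.symm ⟨p₁ ⟨(g₂ z : EuclideanSpace ℝ (Fin d)), htube₁ _ (g₂ z).2⟩,
      projT_mem hreach₁ _⟩ with hAc
  set Bc : Circle → Circle := fun z =>
    g₂.symm ⟨p₂ ⟨(g₁ z : EuclideanSpace ℝ (Fin d)), htube₂ _ (g₁ z).2⟩,
      projT_mem hreach₂ _⟩ with hBc
  have hAcont : Continuous Ac := by
    apply g₁.symm.continuous.comp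
    apply Continuous.subtype_mk
    exact (projT_continuous hreach₁ hR₁c).comp
      (Continuous.subtype_mk (continuous_subtype_val.comp g₂.continuous) _)
  have hBcont : Continuous Bc := by
    apply g₂.symm.continuous.comp
    apply Continuous.subtype_mk
    exact (projT_continuous hreach₂ hR₂c).comp
      (Continuous.subtype_mk (continuous_subtype_val.comp g₁.continuous) _)
  -- proof-irrelevant congruence for projections
  have hp₂congr : ∀ (u v : {z : EuclideanSpace ℝ (Fin d) // Metric.infDist z R₂ ≤ r₂}),
      u.1 = v.1 → p₂ u = p₂ v := by
    intro u v h
    exact congrArg p₂ (Subtype.ext h)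
  have hp₁congr : ∀ (u v : {z : EuclideanSpace ℝ (Fin d) // Metric.infDist z R₁ ≤ r₁}),
      u.1 = v.1 → p₁ u = p₁ v := by
    intro u v h
    exact congrArg p₁ (Subtype.ext h)
  -- clamping function
  set τ : ℝ → ℝ := fun t => max 0 (min 1 t) with hτ
  have hτc : Continuous τ := continuous_const.max (continuous_const.min continuous_id)
  have hτ01 : ∀ t, 0 ≤ τ t ∧ τ t ≤ 1 := fun t =>
    ⟨le_max_left _ _, max_le (by norm_num) (min_le_left _ _)⟩
  have hτ0 : τ 0 = 0 := by simp [hτ]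
  have hτ1 : τ 1 = 1 := by simp [hτ]
  -- basic unfolded values
  have hga : ∀ z : Circle, (g₁ (Ac z) : EuclideanSpace ℝ (Fin d))
      = p₁ ⟨(g₂ z : EuclideanSpace ℝ (Fin d)), htube₁ _ (g₂ z).2⟩ := by
    intro z
    rw [hAc]
    simp only [Homeomorph.apply_symm_apply]
  have hgb : ∀ z : Circle, (g₂ (Bc z) : EuclideanSpace ℝ (Fin d))
      = p₂ ⟨(g₁ z : EuclideanSpace ℝ (Fin d)), htube₂ _ (g₁ z).2⟩ := by
    intro z
    rw [hBc]
    simp only [Homeomorph.apply_symm_apply]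
  -- key distance bound for the segment homotopy
  have hdistab : ∀ z : Circle,
      dist ((g₂ z : EuclideanSpace ℝ (Fin d))) ((g₂ (Bc (Ac z)) : EuclideanSpace ℝ (Fin d)))
        ≤ 2 * ε := by
    intro z
    set a : EuclideanSpace ℝ (Fin d) := (g₂ z : EuclideanSpace ℝ (Fin d)) with haeq
    have ha2 : a ∈ R₂ := (g₂ z).2
    set x : EuclideanSpace ℝ (Fin d) := p₁ ⟨a, htube₁ _ ha2⟩ with hxeq
    have hx1 : x ∈ R₁ := projT_mem hreach₁ _
    have h1 : dist a x ≤ ε := by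
      rw [hxeq]
      have := projT_dist hreach₁ (⟨a, htube₁ _ ha2⟩ :
        {z : EuclideanSpace ℝ (Fin d) // Metric.infDist z R₁ ≤ r₁})
      rw [this]
      exact le_trans (hδbound a ha2) hδε.le
    have hb : (g₂ (Bc (Ac z)) : EuclideanSpace ℝ (Fin d)) = p₂ ⟨x, htube₂ _ hx1⟩ := by
      rw [hgb (Ac z)]
      apply hp₂congr
      exact hga z
    have h2 : dist x (p₂ ⟨x, htube₂ _ hx1⟩) ≤ ε := by
      have := projT_dist hreach₂ (⟨x, htube₂ _ hx1⟩ :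
        {z : EuclideanSpace ℝ (Fin d) // Metric.infDist z R₂ ≤ r₂})
      rw [this]
      exact hεbound x hx1
    calc dist a (g₂ (Bc (Ac z)) : EuclideanSpace ℝ (Fin d))
        ≤ dist a x + dist x (g₂ (Bc (Ac z)) : EuclideanSpace ℝ (Fin d)) := dist_triangle _ _ _
      _ = dist a x + dist x (p₂ ⟨x, htube₂ _ hx1⟩) := by rw [hb]
      _ ≤ ε + ε := add_le_add h1 h2
      _ = 2 * ε := by ring
  -- the segment map and its tube bound
  set seg : ℝ × Circle → EuclideanSpace ℝ (Fin d) := fun q =>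
    (1 - τ q.1) • ((g₂ q.2 : EuclideanSpace ℝ (Fin d)))
      + τ q.1 • ((g₂ (Bc (Ac q.2)) : EuclideanSpace ℝ (Fin d))) with hsegdef
  have hsegtube : ∀ q : ℝ × Circle, Metric.infDist (seg q) R₂ ≤ r₂ := by
    rintro ⟨t, z⟩
    set a : EuclideanSpace ℝ (Fin d) := (g₂ z : EuclideanSpace ℝ (Fin d)) with haeq
    set b : EuclideanSpace ℝ (Fin d) := (g₂ (Bc (Ac z)) : EuclideanSpace ℝ (Fin d)) with hbeq
    have ha2 : a ∈ R₂ := (g₂ z).2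
    have hb2 : b ∈ R₂ := (g₂ (Bc (Ac z))).2
    have hab : dist a b ≤ 2 * ε := hdistab z
    have h0 := (hτ01 t).1
    have h1 := (hτ01 t).2
    have hseg_a : seg (t, z) - a = τ t • (b - a) := by
      rw [hsegdef]
      simp only []
      module
    have hseg_b : seg (t, z) - b = (1 - τ t) • (a - b) := by
      rw [hsegdef]
      simp only []
      module
    rcases le_or_gt (τ t) (1/2) with hhalf | hhalf
    · have : Metric.infDist (seg (t, z)) R₂ ≤ dist (seg (t, z)) a :=
        Metric.infDist_le_dist_of_mem ha2
      apply le_trans this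
      rw [dist_eq_norm, hseg_a, norm_smul, Real.norm_eq_abs, _root_.abs_of_nonneg h0]
      have : ‖b - a‖ = dist a b := by rw [dist_comm, dist_eq_norm]
      rw [this]
      nlinarith
    · have : Metric.infDist (seg (t, z)) R₂ ≤ dist (seg (t, z)) b :=
        Metric.infDist_le_dist_of_mem hb2
      apply le_trans this
      rw [dist_eq_norm, hseg_b, norm_smul, Real.norm_eq_abs, _root_.abs_of_nonneg (by linarith)]
      have : ‖a - b‖ = dist a b := dist_eq_norm a b ▸ rfl
      rw [this]
      nlinarith
  -- the tube homotopy
  set H₁ : ℝ × Circle → Circle := fun q =>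
    g₂.symm ⟨p₂ ⟨seg q, hsegtube q⟩, projT_mem hreach₂ _⟩ with hH₁def
  have hsegc : Continuous seg := by
    apply Continuous.add
    · exact ((continuous_const.sub (hτc.comp continuous_fst))).smul
        (continuous_subtype_val.comp (g₂.continuous.comp continuous_snd))
    · exact (hτc.comp continuous_fst).smul
        (continuous_subtype_val.comp (g₂.continuous.comp
          ((hBcont.comp hAcont).comp continuous_snd)))
  have hH₁c : Continuous H₁ := by
    apply g₂.symm.continuous.comp
    apply Continuous.subtype_mk
    exact (projT_continuous hreach₂ hR₂c).comp (Continuous.subtype_mk hsegc _)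
  have hH₁0 : ∀ z, H₁ (0, z) = z := by
    intro z
    have hseg0 : seg (0, z) = (g₂ z : EuclideanSpace ℝ (Fin d)) := by
      rw [hsegdef]
      simp only [hτ0]
      rw [sub_zero, one_smul, zero_smul, add_zero]
    have ha2 : (g₂ z : EuclideanSpace ℝ (Fin d)) ∈ R₂ := (g₂ z).2
    have htubea : Metric.infDist ((g₂ z : EuclideanSpace ℝ (Fin d))) R₂ ≤ r₂ := by
      rw [Metric.infDist_zero_of_mem ha2]; exact hr₂.le
    have h1 : p₂ ⟨seg (0, z), hsegtube (0, z)⟩ = p₂ ⟨(g₂ z : EuclideanSpace ℝ (Fin d)), htubea⟩ :=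
      hp₂congr _ _ hseg0
    have h2 : p₂ ⟨(g₂ z : EuclideanSpace ℝ (Fin d)), htubea⟩ = (g₂ z : EuclideanSpace ℝ (Fin d)) :=
      projT_fix hreach₂ ha2
    rw [hH₁def]
    calc g₂.symm ⟨p₂ ⟨seg (0, z), hsegtube (0, z)⟩, projT_mem hreach₂ _⟩
        = g₂.symm (g₂ z) := congrArg g₂.symm (Subtype.ext (h1.trans h2))
      _ = z := g₂.symm_apply_apply z
  have hH₁1 : ∀ z, H₁ (1, z) = Bc (Ac z) := by
    intro z
    have hseg1 : seg (1, z) = (g₂ (Bc (Ac z)) : EuclideanSpace ℝ (Fin d)) := by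
      rw [hsegdef]
      simp only [hτ1]
      rw [sub_self, zero_smul, one_smul, zero_add]
    have hb2 : (g₂ (Bc (Ac z)) : EuclideanSpace ℝ (Fin d)) ∈ R₂ := (g₂ (Bc (Ac z))).2
    have htubeb : Metric.infDist ((g₂ (Bc (Ac z)) : EuclideanSpace ℝ (Fin d))) R₂ ≤ r₂ := by
      rw [Metric.infDist_zero_of_mem hb2]; exact hr₂.le
    have h1 : p₂ ⟨seg (1, z), hsegtube (1, z)⟩
        = p₂ ⟨(g₂ (Bc (Ac z)) : EuclideanSpace ℝ (Fin d)), htubeb⟩ := hp₂congr _ _ hseg1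
    have h2 : p₂ ⟨(g₂ (Bc (Ac z)) : EuclideanSpace ℝ (Fin d)), htubeb⟩
        = (g₂ (Bc (Ac z)) : EuclideanSpace ℝ (Fin d)) := projT_fix hreach₂ hb2
    rw [hH₁def]
    calc g₂.symm ⟨p₂ ⟨seg (1, z), hsegtube (1, z)⟩, projT_mem hreach₂ _⟩
        = g₂.symm (g₂ (Bc (Ac z))) := congrArg g₂.symm (Subtype.ext (h1.trans h2))
      _ = Bc (Ac z) := g₂.symm_apply_apply _
  -- the contraction homotopy through the punctured curve R₁ \ {x₀}
  set w : Circle := g₁.symm ⟨x₀, hx₀R₁⟩ with hw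
  have hAw : ∀ z, Ac z ≠ w := by
    intro z h
    have h' : (g₁ (Ac z) : EuclideanSpace ℝ (Fin d)) = x₀ := by
      rw [h, hw]
      simp only [Homeomorph.apply_symm_apply]
    rw [hga z] at h'
    set a : EuclideanSpace ℝ (Fin d) := (g₂ z : EuclideanSpace ℝ (Fin d)) with haeq
    have ha2 : a ∈ R₂ := (g₂ z).2
    have h1 : dist a x₀ = Metric.infDist a R₁ := by
      rw [← h']
      exact projT_dist hreach₁ (⟨a, htube₁ _ ha2⟩ :
        {z : EuclideanSpace ℝ (Fin d) // Metric.infDist z R₁ ≤ r₁})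
    have h2 : Metric.infDist x₀ R₂ ≤ dist x₀ a := Metric.infDist_le_dist_of_mem ha2
    rw [hx₀ε] at h2
    have h3 : Metric.infDist a R₁ ≤ δ := hδbound a ha2
    rw [dist_comm] at h2
    linarith
  set m : Circle := Circle.exp Real.pi with hm
  have hmc : (m : ℂ) = -1 := by
    rw [hm, Circle.coe_exp, Complex.exp_pi_mul_I]
  have hslit : ∀ z, ((m * w⁻¹ * Ac z : Circle) : ℂ) ∈ Complex.slitPlane := by
    intro z
    apply circle_slitPlane
    intro hc
    apply hAw z
    have : ((m * w⁻¹ * Ac z : Circle) : ℂ) = (m : ℂ) := by rw [hc, hmc]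
    have h2 : m * w⁻¹ * Ac z = m := Circle.coe_injective this
    have h3 : w⁻¹ * Ac z = 1 := by
      have h4 : m * (w⁻¹ * Ac z) = m * 1 := by
        rw [mul_one, ← mul_assoc]
        exact h2
      exact mul_left_cancel h4
    calc Ac z = w * (w⁻¹ * Ac z) := by group
      _ = w * 1 := by rw [h3]
      _ = w := mul_one w
  set H₂ : ℝ × Circle → Circle := fun q =>
    Bc (w * m⁻¹ * Circle.exp ((1 - τ q.1) * Complex.arg ((m * w⁻¹ * Ac q.2 : Circle) : ℂ)))
    with hH₂def
  have hH₂c : Continuous H₂ := by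
    apply hBcont.comp
    apply continuous_const.mul
    apply Circle.exp.continuous.comp
    apply Continuous.mul
    · exact continuous_const.sub (hτc.comp continuous_fst)
    · rw [continuous_iff_continuousAt]
      intro q
      have hinner : Continuous fun q : ℝ × Circle => ((m * w⁻¹ * Ac q.2 : Circle) : ℂ) :=
        continuous_subtype_val.comp ((continuous_const.mul (hAcont.comp continuous_snd)))
      have hc2 : ContinuousAt
          (Complex.arg ∘ fun q : ℝ × Circle => ((m * w⁻¹ * Ac q.2 : Circle) : ℂ)) q :=
        ContinuousAt.comp (Complex.continuousAt_arg (hslit q.2)) hinner.continuousAt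
      exact hc2
  have hH₂0 : ∀ z, H₂ (0, z) = Bc (Ac z) := by
    intro z
    rw [hH₂def]
    simp only [hτ0]
    rw [sub_zero, one_mul]
    congr 1
    have harg : Circle.exp (Complex.arg ((m * w⁻¹ * Ac z : Circle) : ℂ)) = m * w⁻¹ * Ac z :=
      Circle.exp_arg _
    rw [harg]
    group
  have hH₂1 : ∀ z, H₂ (1, z) = Bc (w * m⁻¹) := by
    intro z
    rw [hH₂def]
    simp only [hτ1]
    rw [sub_self, zero_mul, Circle.exp_zero, mul_one]
  -- assemble: the identity on the circle has a continuous logarithm, contradiction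
  have hlog_const : HasCLog (fun z => H₂ (1, z)) := by
    refine ⟨fun _ => Complex.arg ((Bc (w * m⁻¹) : Circle) : ℂ), continuous_const, ?_⟩
    intro z
    show Circle.exp (Complex.arg ((Bc (w * m⁻¹) : Circle) : ℂ)) = H₂ (1, z)
    rw [hH₂1 z]
    exact Circle.exp_arg _
  have hlog_F : HasCLog (fun z => Bc (Ac z)) := by
    have := HasCLog.homotopy hH₂c 1 0 hlog_const
    rwa [show (fun z => H₂ (0, z)) = fun z => Bc (Ac z) from funext hH₂0] at this
  have hlog_id : HasCLog id := by
    have h1 : HasCLog (fun z => H₁ (1, z)) := by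
      rwa [show (fun z => H₁ (1, z)) = fun z => Bc (Ac z) from funext hH₁1]
    have h2 := HasCLog.homotopy hH₁c 1 0 h1
    rwa [show (fun z => H₁ (0, z)) = id from funext hH₁0] at h2
  exact no_clog_id hlog_id


/-- Lemma 7: let `R₁`, `R₂` be two closed non-self-intersecting curves (images of
continuous injective maps from the circle) with reach at least `r₁`, `r₂ > 0`
respectively. If `Haus(R₁, R₂) < (2 − √2) min{r₁, r₂}`, then the quasi-Hausdorff
distances in both directions agree with the Hausdorff distance. -/
theorem stmt9 (d : ℕ) (R₁ R₂ : Set (EuclideanSpace ℝ (Fin d)))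
    (hR₁ne : R₁.Nonempty) (hR₂ne : R₂.Nonempty)
    (hR₁c : IsCompact R₁) (hR₂c : IsCompact R₂)
    (hcurve₁ : ∃ f : Metric.sphere (0 : EuclideanSpace ℝ (Fin 2)) 1 →
        EuclideanSpace ℝ (Fin d),
      Continuous f ∧ Function.Injective f ∧ R₁ = Set.range f)
    (hcurve₂ : ∃ f : Metric.sphere (0 : EuclideanSpace ℝ (Fin 2)) 1 →
        EuclideanSpace ℝ (Fin d),
      Continuous f ∧ Function.Injective f ∧ R₂ = Set.range f)
    (r₁ r₂ : ℝ) (hr₁ : 0 < r₁) (hr₂ : 0 < r₂)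
    (hreach₁ : ∀ z : EuclideanSpace ℝ (Fin d), Metric.infDist z R₁ ≤ r₁ →
      ∃! y, y ∈ R₁ ∧ dist z y = Metric.infDist z R₁)
    (hreach₂ : ∀ z : EuclideanSpace ℝ (Fin d), Metric.infDist z R₂ ≤ r₂ →
      ∃! y, y ∈ R₂ ∧ dist z y = Metric.infDist z R₂)
    (hclose : hausDist R₁ R₂ < (2 - Real.sqrt 2) * min r₁ r₂) :
    distPi R₂ R₁ = distPi R₁ R₂ ∧ distPi R₁ R₂ = hausDist R₁ R₂ := by
  have h1 : distPi R₂ R₁ ≤ distPi R₁ R₂ :=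
    key_le d R₁ R₂ hR₁ne hR₂ne hR₁c hR₂c hcurve₁ hcurve₂ r₁ r₂ hr₁ hr₂ hreach₁ hreach₂ hclose
  have h2 : distPi R₁ R₂ ≤ distPi R₂ R₁ := by
    apply key_le d R₂ R₁ hR₂ne hR₁ne hR₂c hR₁c hcurve₂ hcurve₁ r₂ r₁ hr₂ hr₁ hreach₂ hreach₁
    have hsym : hausDist R₂ R₁ = hausDist R₁ R₂ := by
      unfold hausDist
      exact max_comm _ _
    rw [hsym, min_comm]
    exact hclose
  have heq : distPi R₂ R₁ = distPi R₁ R₂ := le_antisymm h1 h2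
  refine ⟨heq, ?_⟩
  show distPi R₁ R₂ = max (distPi R₁ R₂) (distPi R₂ R₁)
  rw [heq, max_self]
end
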